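/- Suppose V(s(t)) is nonincreasing along a trajectory, V(s(0)) < ∞, and for all t, ∫₀ᵗ G(τ)dτ ≥ V(s(t)) - V(s(0)) with G(τ) ≤ 0, where G(τ) = L(x*, λ(τ), μ(τ), ω*, ν*) - L(x(τ), λ*, μ*, ω(τ), ν(τ)). Then the ergodic averages satisfy 0 ≤ L(x̂, λ*, μ*, ω̂, ν̂) - L(x*, λ̂, μ̂, ω*, ν*) ≤ V(s(0))/t. -/

import Mathlib

open MeasureTheory

/-- O(1/t) ergodic rate (Theorem 2): if `W t = V(s(t))` is nonnegative with
`∫₀ᵗ G(τ)dτ ≥ W t - W 0` and `G(τ) ≤ 0`, where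
`G(τ) = L(xs, λ(τ), μ(τ), ωs, νs) - L(x(τ), λs, μs, ω(τ), ν(τ))`, `L` convex in the
primal variables `(x, ω, ν)`, concave in `(λ, μ)`, and `zs` a saddle point, then the
time averages satisfy `0 ≤ L(x̂, λs, μs, ω̂, ν̂) - L(xs, λ̂, μ̂, ωs, νs) ≤ W 0 / t`. -/
theorem ergodic_rate_O_one_over_t
    {n p q w v : ℕ}
    (L : ((Fin n → ℝ) × (Fin w → ℝ) × (Fin v → ℝ)) → ((Fin p → ℝ) × (Fin q → ℝ)) → ℝ)
    (hconv : ∀ d, ConvexOn ℝ Set.univ (fun u => L u d))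
    (hconc : ∀ u, ConcaveOn ℝ Set.univ (L u))
    (xs : Fin n → ℝ) (ws : Fin w → ℝ) (vs : Fin v → ℝ)
    (ls : Fin p → ℝ) (ms : Fin q → ℝ)
    (hsaddle : ∀ u d, L (xs, ws, vs) d ≤ L (xs, ws, vs) (ls, ms) ∧
      L (xs, ws, vs) (ls, ms) ≤ L u (ls, ms))
    (x : ℝ → (Fin n → ℝ)) (ω : ℝ → (Fin w → ℝ)) (ν : ℝ → (Fin v → ℝ))
    (lam : ℝ → (Fin p → ℝ)) (mu : ℝ → (Fin q → ℝ))
    (t : ℝ) (ht : 0 < t)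
    (G : ℝ → ℝ)
    (hG : ∀ τ, G τ = L (xs, ws, vs) (lam τ, mu τ) - L (x τ, ω τ, ν τ) (ls, ms))
    (hGnonpos : ∀ τ ∈ Set.Icc 0 t, G τ ≤ 0)
    (W : ℝ → ℝ) (hWnonneg : ∀ τ, 0 ≤ W τ)
    (hWdec : ∀ τ₁ τ₂, 0 ≤ τ₁ → τ₁ ≤ τ₂ → W τ₂ ≤ W τ₁)
    (hint : W t - W 0 ≤ ∫ τ in (0:ℝ)..t, G τ)
    (hGint : IntervalIntegrable G volume 0 t)
    (hxint : IntervalIntegrable x volume 0 t) (hωint : IntervalIntegrable ω volume 0 t)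
    (hνint : IntervalIntegrable ν volume 0 t)
    (hlamint : IntervalIntegrable lam volume 0 t)
    (hmuint : IntervalIntegrable mu volume 0 t)
    (hint1 : IntervalIntegrable (fun τ => L (xs, ws, vs) (lam τ, mu τ)) volume 0 t)
    (hint2 : IntervalIntegrable (fun τ => L (x τ, ω τ, ν τ) (ls, ms)) volume 0 t)
    (xhat : Fin n → ℝ) (hxhat : xhat = (1 / t) • ∫ τ in (0:ℝ)..t, x τ)
    (ωhat : Fin w → ℝ) (hωhat : ωhat = (1 / t) • ∫ τ in (0:ℝ)..t, ω τ)
    (νhat : Fin v → ℝ) (hνhat : νhat = (1 / t) • ∫ τ in (0:ℝ)..t, ν τ)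
    (lhat : Fin p → ℝ) (hlhat : lhat = (1 / t) • ∫ τ in (0:ℝ)..t, lam τ)
    (mhat : Fin q → ℝ) (hmhat : mhat = (1 / t) • ∫ τ in (0:ℝ)..t, mu τ) :
    0 ≤ L (xhat, ωhat, νhat) (ls, ms) - L (xs, ws, vs) (lhat, mhat) ∧
      L (xhat, ωhat, νhat) (ls, ms) - L (xs, ws, vs) (lhat, mhat) ≤ W 0 / t := by
  -- notation
  have ht' : (0:ℝ) ≤ t := ht.le
  set u0 : (Fin n → ℝ) × (Fin w → ℝ) × (Fin v → ℝ) := (xs, ws, vs) with hu0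
  set uhat : (Fin n → ℝ) × (Fin w → ℝ) × (Fin v → ℝ) := (xhat, ωhat, νhat) with huhat
  -- lower bound from saddle point
  obtain ⟨h1, h2⟩ := hsaddle uhat (lhat, mhat)
  refine ⟨by linarith, ?_⟩
  -- measure facts
  have hμ0 : volume (Set.Ioc (0:ℝ) t) ≠ 0 := by
    simp [Real.volume_Ioc, ht]
  have hμt : volume (Set.Ioc (0:ℝ) t) ≠ ⊤ := by
    simp [Real.volume_Ioc]
  have htoReal : (volume (Set.Ioc (0:ℝ) t)).toReal = t := by
    simp [Real.volume_Ioc, ENNReal.toReal_ofReal ht']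
  -- Jensen for the convex part
  have hjconv : L uhat (ls, ms) ≤ (1 / t) * ∫ τ in (0:ℝ)..t, L (x τ, ω τ, ν τ) (ls, ms) := by
    have hcont : ContinuousOn (fun u => L u (ls, ms)) Set.univ :=
      (hconv (ls, ms)).continuousOn isOpen_univ
    have hfi : IntegrableOn (fun τ => ((x τ, ω τ, ν τ) :
        (Fin n → ℝ) × (Fin w → ℝ) × (Fin v → ℝ))) (Set.Ioc 0 t) volume :=
      (hxint.1).prodMk ((hωint.1).prodMk (hνint.1))
    have hgi : IntegrableOn ((fun u => L u (ls, ms)) ∘ fun τ => ((x τ, ω τ, ν τ) :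
        (Fin n → ℝ) × (Fin w → ℝ) × (Fin v → ℝ))) (Set.Ioc 0 t) volume := hint2.1
    have hJ := (hconv (ls, ms)).map_set_average_le hcont isClosed_univ hμ0 hμt
      (Filter.Eventually.of_forall fun τ => Set.mem_univ _) hfi hgi
    have havg1 : (⨍ τ in Set.Ioc (0:ℝ) t, ((x τ, ω τ, ν τ) :
        (Fin n → ℝ) × (Fin w → ℝ) × (Fin v → ℝ)) ∂volume) = uhat := by
      rw [setAverage_eq, measureReal_def, htoReal]
      have hpair : (∫ τ in Set.Ioc (0:ℝ) t, ((x τ, ω τ, ν τ) :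
          (Fin n → ℝ) × (Fin w → ℝ) × (Fin v → ℝ)) ∂volume)
          = (∫ τ in Set.Ioc (0:ℝ) t, x τ ∂volume,
             ∫ τ in Set.Ioc (0:ℝ) t, ω τ ∂volume,
             ∫ τ in Set.Ioc (0:ℝ) t, ν τ ∂volume) := by
        rw [integral_pair (hxint.1) ((hωint.1).prodMk (hνint.1)),
          integral_pair (hωint.1) (hνint.1)]
      rw [hpair, huhat, hxhat, hωhat, hνhat, Prod.smul_mk, Prod.smul_mk]
      rw [intervalIntegral.integral_of_le ht', intervalIntegral.integral_of_le ht',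
        intervalIntegral.integral_of_le ht']
      simp [one_div]
    have havg2 : (⨍ τ in Set.Ioc (0:ℝ) t, L (x τ, ω τ, ν τ) (ls, ms) ∂volume)
        = (1 / t) * ∫ τ in (0:ℝ)..t, L (x τ, ω τ, ν τ) (ls, ms) := by
      rw [setAverage_eq, measureReal_def, htoReal, intervalIntegral.integral_of_le ht']
      simp [one_div]
    rw [havg1, havg2] at hJ
    exact hJ
  -- Jensen for the concave part
  have hjconc : (1 / t) * ∫ τ in (0:ℝ)..t, L u0 (lam τ, mu τ) ≤ L u0 (lhat, mhat) := by
    have hcont : ContinuousOn (L u0) Set.univ :=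
      (hconc u0).continuousOn isOpen_univ
    have hfi : IntegrableOn (fun τ => ((lam τ, mu τ) :
        (Fin p → ℝ) × (Fin q → ℝ))) (Set.Ioc 0 t) volume :=
      (hlamint.1).prodMk (hmuint.1)
    have hgi : IntegrableOn ((L u0) ∘ fun τ => ((lam τ, mu τ) :
        (Fin p → ℝ) × (Fin q → ℝ))) (Set.Ioc 0 t) volume := hint1.1
    have hJ := (hconc u0).le_map_set_average hcont isClosed_univ hμ0 hμt
      (Filter.Eventually.of_forall fun τ => Set.mem_univ _) hfi hgi
    have havg1 : (⨍ τ in Set.Ioc (0:ℝ) t, ((lam τ, mu τ) :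
        (Fin p → ℝ) × (Fin q → ℝ)) ∂volume) = (lhat, mhat) := by
      rw [setAverage_eq, measureReal_def, htoReal]
      rw [integral_pair (hlamint.1) (hmuint.1), hlhat, hmhat, Prod.smul_mk]
      rw [intervalIntegral.integral_of_le ht', intervalIntegral.integral_of_le ht']
      simp [one_div]
    have havg2 : (⨍ τ in Set.Ioc (0:ℝ) t, L u0 (lam τ, mu τ) ∂volume)
        = (1 / t) * ∫ τ in (0:ℝ)..t, L u0 (lam τ, mu τ) := by
      rw [setAverage_eq, measureReal_def, htoReal, intervalIntegral.integral_of_le ht']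
      simp [one_div]
    rw [havg1, havg2] at hJ
    exact hJ
  -- integral identity for G
  have hGeq : (∫ τ in (0:ℝ)..t, G τ)
      = (∫ τ in (0:ℝ)..t, L u0 (lam τ, mu τ)) - ∫ τ in (0:ℝ)..t, L (x τ, ω τ, ν τ) (ls, ms) := by
    rw [← intervalIntegral.integral_sub hint1 hint2]
    exact intervalIntegral.integral_congr fun τ _ => hG τ
  have hWt : 0 ≤ W t := hWnonneg t
  have hkey : L uhat (ls, ms) - L u0 (lhat, mhat)
      ≤ (1 / t) * (-(∫ τ in (0:ℝ)..t, G τ)) := by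
    have := sub_le_sub hjconv hjconc
    calc L uhat (ls, ms) - L u0 (lhat, mhat)
        ≤ (1 / t) * (∫ τ in (0:ℝ)..t, L (x τ, ω τ, ν τ) (ls, ms))
          - (1 / t) * ∫ τ in (0:ℝ)..t, L u0 (lam τ, mu τ) := this
      _ = (1 / t) * (-(∫ τ in (0:ℝ)..t, G τ)) := by rw [hGeq]; ring
  have hneg : -(∫ τ in (0:ℝ)..t, G τ) ≤ W 0 := by
    have := hint
    linarith
  have h1t : (0:ℝ) ≤ 1 / t := by positivity
  have hfin : (1 / t) * (-(∫ τ in (0:ℝ)..t, G τ)) ≤ W 0 / t :=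
    calc (1 / t) * (-(∫ τ in (0:ℝ)..t, G τ)) ≤ (1 / t) * W 0 :=
          mul_le_mul_of_nonneg_left hneg h1t
      _ = W 0 / t := by ring
  linarith
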